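/- The Newtonian potential of a ball: if ρ is a constant density on the ball B_R ⊂ ℝ³ of radius R centered at the origin, then for any point q with ‖q‖ > R, the integral f(q) = ∫_{B_R} ρ/‖q − p‖ dp equals M/‖q‖, where M = (4/3)πR³ρ is the total mass; moreover, for a spherical shell, the potential inside the cavity is constant (so the gravity field there vanishes). -/

import Mathlib

open MeasureTheory intervalIntegral Real Set Metric

noncomputable abbrev E3 := EuclideanSpace ℝ (Fin 3)
noncomputable abbrev E2 := EuclideanSpace ℝ (Fin 2)


lemma mid_int (d r : ℝ) (hd : 0 < d) (hr : 0 ≤ r) (hdr : d ≠ r) :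
    ∫ z in (-r)..r, Real.sqrt (d^2 + r^2 - 2*d*z) =
      ((d+r)^3 - |d-r|^3) / (3*d) := by
  have hne : d - r ≠ 0 := sub_ne_zero.mpr hdr
  have hpos : ∀ z ∈ Set.uIcc (-r) r, 0 < d^2 + r^2 - 2*d*z := by
    intro z hz
    rw [Set.uIcc_of_le (by linarith)] at hz
    have h2 : (d - r)^2 > 0 := by positivity
    nlinarith [hz.2]
  have key : ∫ z in (-r)..r, Real.sqrt (d^2 + r^2 - 2*d*z) =
      (-(1/(3*d)) * (Real.sqrt (d^2 + r^2 - 2*d*r))^3) -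
      (-(1/(3*d)) * (Real.sqrt (d^2 + r^2 - 2*d*(-r)))^3) := by
    apply integral_eq_sub_of_hasDerivAt (f := fun z => -(1/(3*d)) * (Real.sqrt (d^2 + r^2 - 2*d*z))^3)
    · intro z hz
      have hz' := hpos z hz
      have hg : HasDerivAt (fun z => d^2 + r^2 - 2*d*z) (-(2*d)) z := by
        simpa using ((hasDerivAt_id z).const_mul (2*d)).const_sub (d^2+r^2)
      have hs : HasDerivAt (fun z => Real.sqrt (d^2 + r^2 - 2*d*z))
          (1/(2*Real.sqrt (d^2 + r^2 - 2*d*z)) * (-(2*d))) z :=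
        (Real.hasDerivAt_sqrt hz'.ne').comp z hg
      have h3 : HasDerivAt (fun z => (Real.sqrt (d^2 + r^2 - 2*d*z))^3)
          (3 * (Real.sqrt (d^2 + r^2 - 2*d*z))^2 *
            (1/(2*Real.sqrt (d^2 + r^2 - 2*d*z)) * (-(2*d)))) z := by
        simpa using hs.fun_pow 3
      have := h3.const_mul (-(1/(3*d)))
      refine this.congr_deriv ?_
      have hs0 : Real.sqrt (d^2 + r^2 - 2*d*z) ≠ 0 := (Real.sqrt_pos.mpr hz').ne'
      set s := Real.sqrt (d^2 + r^2 - 2*d*z) with hs_def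
      field_simp
    · apply Continuous.intervalIntegrable
      exact (continuous_const.sub (continuous_const.mul continuous_id)).sqrt
  rw [key]
  have e1 : d^2 + r^2 - 2*d*r = (d-r)^2 := by ring
  have e2 : d^2 + r^2 - 2*d*(-r) = (d+r)^2 := by ring
  rw [e1, e2, Real.sqrt_sq_eq_abs, Real.sqrt_sq_eq_abs, abs_of_nonneg (by linarith : (0:ℝ) ≤ d + r)]
  field_simp
  ring

lemma lin_int (c a b : ℝ) : ∫ z in a..b, (c - z) = c*(b-a) - (b^2-a^2)/2 := by
  rw [intervalIntegral.integral_sub intervalIntegrable_const intervalIntegral.intervalIntegrable_id,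
    intervalIntegral.integral_const, integral_id]
  simp [smul_eq_mul]; ring

lemma lin_int' (c a b : ℝ) : ∫ z in a..b, (z - c) = (b^2-a^2)/2 - c*(b-a) := by
  rw [intervalIntegral.integral_sub intervalIntegral.intervalIntegrable_id intervalIntegrable_const,
    intervalIntegral.integral_const, integral_id]
  simp [smul_eq_mul]; ring

lemma Hcont (d r : ℝ) : Continuous (fun z : ℝ => Real.sqrt ((d-z)^2 + max (r^2 - z^2) 0)) := by
  apply Continuous.sqrt
  exact ((continuous_const.sub continuous_id).pow 2).add
    ((continuous_const.sub (continuous_id.pow 2)).max continuous_const)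

lemma K_int (d r R₂ : ℝ) (hd : 0 ≤ d) (hr : 0 ≤ r) (hrR : r ≤ R₂) (hcase : R₂ < d ∨ d < r) :
    ∫ z in (-R₂)..R₂, Real.sqrt ((d-z)^2 + max (r^2 - z^2) 0) =
      if R₂ < d then 2*d*R₂ + 2*r^3/(3*d) else R₂^2 + r^2 + (2/3)*d^2 := by
  have hii : ∀ a b : ℝ, IntervalIntegrable (fun z : ℝ => Real.sqrt ((d-z)^2 + max (r^2 - z^2) 0)) volume a b :=
    fun a b => (Hcont d r).intervalIntegrable a b
  have hsplit : ∫ z in (-R₂)..R₂, Real.sqrt ((d-z)^2 + max (r^2 - z^2) 0) =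
      (∫ z in (-R₂)..(-r), Real.sqrt ((d-z)^2 + max (r^2 - z^2) 0)) +
      (∫ z in (-r)..r, Real.sqrt ((d-z)^2 + max (r^2 - z^2) 0)) +
      (∫ z in r..R₂, Real.sqrt ((d-z)^2 + max (r^2 - z^2) 0)) := by
    rw [integral_add_adjacent_intervals (hii _ _) (hii _ _),
      integral_add_adjacent_intervals (hii _ _) (hii _ _)]
  -- piece 1 : [-R₂, -r]
  have p1 : ∫ z in (-R₂)..(-r), Real.sqrt ((d-z)^2 + max (r^2 - z^2) 0) =
      ∫ z in (-R₂)..(-r), (d - z) := by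
    apply intervalIntegral.integral_congr
    intro z hz
    rw [Set.uIcc_of_le (by linarith)] at hz
    have h1 : r^2 - z^2 ≤ 0 := by nlinarith [hz.1, hz.2]
    have h2 : 0 ≤ d - z := by nlinarith [hz.2]
    show Real.sqrt ((d - z)^2 + max (r^2 - z^2) 0) = d - z
    rw [max_eq_right h1, add_zero, Real.sqrt_sq h2]
  -- piece 2 : [-r, r]
  have p2 : ∫ z in (-r)..r, Real.sqrt ((d-z)^2 + max (r^2 - z^2) 0) =
      ∫ z in (-r)..r, Real.sqrt (d^2 + r^2 - 2*d*z) := by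
    apply intervalIntegral.integral_congr
    intro z hz
    rw [Set.uIcc_of_le (by linarith)] at hz
    have h1 : 0 ≤ r^2 - z^2 := by nlinarith [hz.1, hz.2]
    show Real.sqrt ((d - z)^2 + max (r^2 - z^2) 0) = Real.sqrt (d^2 + r^2 - 2*d*z)
    rw [max_eq_left h1]
    congr 1; ring
  -- piece 3 : [r, R₂]
  have p3 : ∫ z in r..R₂, Real.sqrt ((d-z)^2 + max (r^2 - z^2) 0) =
      ∫ z in r..R₂, |d - z| := by
    apply intervalIntegral.integral_congr
    intro z hz
    rw [Set.uIcc_of_le (by linarith)] at hz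
    have h1 : r^2 - z^2 ≤ 0 := by nlinarith [hz.1, hz.2]
    show Real.sqrt ((d - z)^2 + max (r^2 - z^2) 0) = |d - z|
    rw [max_eq_right h1, add_zero, Real.sqrt_sq_eq_abs]
  rw [hsplit, p1, p2, p3, lin_int]
  rcases hcase with hout | hin
  · -- outside : R₂ < d
    have hd0 : 0 < d := lt_of_le_of_lt (by linarith) hout
    have hdr : d ≠ r := by intro h; rw [h] at hout; linarith
    rw [mid_int d r hd0 hr hdr, if_pos hout]
    have p3' : ∫ z in r..R₂, |d - z| = ∫ z in r..R₂, (d - z) := by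
      apply intervalIntegral.integral_congr
      intro z hz
      rw [Set.uIcc_of_le (by linarith)] at hz
      show |d - z| = d - z
      exact abs_of_nonneg (by linarith [hz.2])
    rw [p3', lin_int, abs_of_nonneg (by linarith : (0:ℝ) ≤ d - r)]
    field_simp
    ring
  · -- inside : d < r
    have hdr : d ≠ r := ne_of_lt hin
    rw [if_neg (by linarith)]
    have p3' : ∫ z in r..R₂, |d - z| = ∫ z in r..R₂, (z - d) := by
      apply intervalIntegral.integral_congr
      intro z hz
      rw [Set.uIcc_of_le (by linarith)] at hz
      show |d - z| = z - d
      rw [abs_of_nonpos (by linarith [hz.1]), neg_sub]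
    rw [p3', lin_int']
    rcases eq_or_lt_of_le hd with h0 | hd0
    · -- d = 0
      have : ∫ z in (-r)..r, Real.sqrt (d^2 + r^2 - 2*d*z) = ∫ z in (-r)..r, (r:ℝ) := by
        apply intervalIntegral.integral_congr
        intro z _
        rw [← h0]; simp [Real.sqrt_sq hr]
      rw [this, intervalIntegral.integral_const, ← h0]
      simp [smul_eq_mul]; ring
    · rw [mid_int d r hd0 hr hdr, abs_of_nonpos (by linarith : d - r ≤ 0)]
      field_simp
      ring

lemma vol_ball2 : (volume (ball (0 : EuclideanSpace ℝ (Fin 2)) 1)).toReal = π := by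
  rw [EuclideanSpace.volume_ball]
  norm_num
  rw [Real.sq_sqrt Real.pi_nonneg]

lemma ftc2 (c a₁ a₂ : ℝ) (hc : c ≠ 0) (h12 : a₁ ≤ a₂) :
    ∫ y in a₁..a₂, y * (1 / Real.sqrt (c^2 + y^2)) =
      Real.sqrt (c^2 + a₂^2) - Real.sqrt (c^2 + a₁^2) := by
  have hpos : ∀ y : ℝ, 0 < c^2 + y^2 := fun y => by positivity
  apply integral_eq_sub_of_hasDerivAt (f := fun y => Real.sqrt (c^2 + y^2))
  · intro y _
    have hg : HasDerivAt (fun y : ℝ => c^2 + y^2) (2*y) y := by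
      simpa [mul_comm] using (((hasDerivAt_id y).pow 2).const_add (c^2))
    have hs := (Real.hasDerivAt_sqrt (hpos y).ne').comp y hg
    refine hs.congr_deriv ?_
    have : Real.sqrt (c^2 + y^2) ≠ 0 := (Real.sqrt_pos.mpr (hpos y)).ne'
    field_simp
  · apply Continuous.intervalIntegrable
    have : Continuous fun y : ℝ => Real.sqrt (c^2 + y^2) :=
      (continuous_const.add (continuous_id.pow 2)).sqrt
    exact continuous_id.mul (continuous_const.div this (fun y => (Real.sqrt_pos.mpr (hpos y)).ne'))

lemma annulus2 (c a₁ a₂ : ℝ) (hc : c ≠ 0) (h1 : 0 ≤ a₁) (h12 : a₁ ≤ a₂) :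
    ∫ y in {y : EuclideanSpace ℝ (Fin 2) | a₁ ≤ ‖y‖ ∧ ‖y‖ ≤ a₂},
        (1 : ℝ) / Real.sqrt (c^2 + ‖y‖^2) =
      2*π*(Real.sqrt (c^2+a₂^2) - Real.sqrt (c^2+a₁^2)) := by
  have hsets : {y : EuclideanSpace ℝ (Fin 2) | a₁ ≤ ‖y‖ ∧ ‖y‖ ≤ a₂} =
      (fun y : EuclideanSpace ℝ (Fin 2) => ‖y‖) ⁻¹' (Icc a₁ a₂) := rfl
  have hms : MeasurableSet {y : EuclideanSpace ℝ (Fin 2) | a₁ ≤ ‖y‖ ∧ ‖y‖ ≤ a₂} := by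
    rw [hsets]; exact measurableSet_Icc.preimage continuous_norm.measurable
  rw [← MeasureTheory.integral_indicator hms]
  have hind : ∀ y : EuclideanSpace ℝ (Fin 2),
      Set.indicator {y : EuclideanSpace ℝ (Fin 2) | a₁ ≤ ‖y‖ ∧ ‖y‖ ≤ a₂}
        (fun y => (1:ℝ) / Real.sqrt (c^2 + ‖y‖^2)) y =
      Set.indicator (Icc a₁ a₂) (fun t => (1:ℝ) / Real.sqrt (c^2 + t^2)) ‖y‖ := by
    intro y
    by_cases h : a₁ ≤ ‖y‖ ∧ ‖y‖ ≤ a₂ <;>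
      simp [Set.indicator_of_mem, Set.indicator_of_notMem, h, Set.mem_Icc, Set.mem_setOf_eq]
  rw [integral_congr_ae (Filter.Eventually.of_forall hind)]
  rw [integral_fun_norm_addHaar (volume : Measure (EuclideanSpace ℝ (Fin 2)))
    (Set.indicator (Icc a₁ a₂) (fun t => (1:ℝ) / Real.sqrt (c^2 + t^2)))]
  rw [finrank_euclideanSpace_fin, measureReal_def, vol_ball2]
  have hsm : ∀ y : ℝ, y ^ (2-1) • Set.indicator (Icc a₁ a₂)
        (fun t => (1:ℝ) / Real.sqrt (c^2 + t^2)) y =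
      Set.indicator (Icc a₁ a₂) (fun t => t * (1 / Real.sqrt (c^2 + t^2))) y := by
    intro y
    simp only [pow_one, smul_eq_mul]
    by_cases hy : y ∈ Icc a₁ a₂ <;> simp [Set.indicator_of_mem, Set.indicator_of_notMem, hy]
  rw [integral_congr_ae (Filter.Eventually.of_forall (fun y => hsm y))]
  rw [MeasureTheory.integral_indicator measurableSet_Icc,
    Measure.restrict_restrict measurableSet_Icc]
  have hIcc : (Icc a₁ a₂ ∩ Ioi (0:ℝ) : Set ℝ) =ᵐ[volume] (Ioc a₁ a₂ : Set ℝ) := by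
    rw [MeasureTheory.ae_eq_set]
    constructor
    · refine measure_mono_null (fun x hx => ?_) (measure_singleton a₁)
      obtain ⟨⟨⟨hx1, hx2⟩, hx0⟩, hx3⟩ := hx
      simp only [mem_Ioc, not_and, not_le] at hx3
      have hxa : x = a₁ := le_antisymm (by
        by_contra h
        exact absurd hx2 (not_le.mpr (hx3 (not_le.mp h)))) hx1
      simp [hxa]
    · refine measure_mono_null (fun x hx => ?_) (measure_empty (μ := volume))
      obtain ⟨⟨hx1, hx2⟩, hx3⟩ := hx
      exact absurd ⟨⟨le_of_lt hx1, hx2⟩, lt_of_le_of_lt h1 hx1⟩ hx3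
  rw [setIntegral_congr_set hIcc, ← intervalIntegral.integral_of_le h12,
    ftc2 c a₁ a₂ hc h12]
  rw [nsmul_eq_mul, smul_eq_mul]
  push_cast
  ring


lemma norm3 (p : E3) : ‖p‖ = Real.sqrt (p 0^2 + p 1^2 + p 2^2) := by
  rw [EuclideanSpace.norm_eq, Fin.sum_univ_three]
  simp [sq_abs]

lemma norm2 (w : E2) : ‖w‖ = Real.sqrt (w 0^2 + w 1^2) := by
  rw [EuclideanSpace.norm_eq, Fin.sum_univ_two]
  simp [sq_abs]

lemma phi3_apply (x : Fin 3 → ℝ) (i : Fin 3) :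
    (((MeasurableEquiv.toLp 2 (Fin 3 → ℝ)).symm).symm x : E3) i = x i := rfl

lemma phi2_apply (w : E2) (i : Fin 2) :
    (((MeasurableEquiv.toLp 2 (Fin 2 → ℝ)).symm) w) i = w i := rfl

lemma insert3 (z : ℝ) (y : Fin 2 → ℝ) :
    ((MeasurableEquiv.piFinSuccAbove (fun _ : Fin 3 => ℝ) 0).symm (z, y)) = ![z, y 0, y 1] := by
  funext i
  fin_cases i <;> rfl


lemma rot (q v : E3) (h : ‖q‖ = ‖v‖) (R₁ R₂ : ℝ) :
    ∫ p in {p : E3 | R₁ ≤ ‖p‖ ∧ ‖p‖ ≤ R₂}, (1:ℝ)/‖q - p‖ =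
    ∫ p in {p : E3 | R₁ ≤ ‖p‖ ∧ ‖p‖ ≤ R₂}, (1:ℝ)/‖v - p‖ := by
  by_cases hqv : q = v
  · rw [hqv]
  · set f := Submodule.reflection (ℝ ∙ (q - v))ᗮ with hf
    have hfq : f q = v := Submodule.reflection_sub h
    have hinv : ∀ p, f (f p) = p := fun p => Submodule.reflection_involutive _ p
    have hmp : MeasurePreserving f volume volume := f.measurePreserving
    have hemb : MeasurableEmbedding f := f.toHomeomorph.measurableEmbedding
    have hpre : f ⁻¹' {p : E3 | R₁ ≤ ‖p‖ ∧ ‖p‖ ≤ R₂} = {p : E3 | R₁ ≤ ‖p‖ ∧ ‖p‖ ≤ R₂} := by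
      ext p; simp [f.norm_map]
    have := hmp.setIntegral_preimage_emb hemb (fun p => (1:ℝ)/‖v - p‖)
      {p : E3 | R₁ ≤ ‖p‖ ∧ ‖p‖ ≤ R₂}
    rw [hpre] at this
    rw [← this]
    apply setIntegral_congr_fun (by
      have : IsClosed {p : E3 | R₁ ≤ ‖p‖ ∧ ‖p‖ ≤ R₂} :=
        (isClosed_le continuous_const continuous_norm).inter
          (isClosed_le continuous_norm continuous_const)
      exact this.measurableSet)
    intro p _
    have : ‖v - f p‖ = ‖q - p‖ := by
      rw [← hfq]
      calc ‖f q - f p‖ = ‖f (q - p)‖ := by rw [map_sub]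
        _ = ‖q - p‖ := f.norm_map _
    simp [this]


set_option maxHeartbeats 1600000 in
lemma annulus3 (R₁ R₂ : ℝ) (h1 : 0 ≤ R₁) (h12 : R₁ ≤ R₂) (hR2 : 0 < R₂) (q : E3)
    (hcase : R₂ < ‖q‖ ∨ ‖q‖ < R₁) :
    ∫ p in {p : E3 | R₁ ≤ ‖p‖ ∧ ‖p‖ ≤ R₂}, (1:ℝ)/‖q - p‖ =
      if R₂ < ‖q‖ then 4/3*π*(R₂^3 - R₁^3)/‖q‖ else 2*π*(R₂^2 - R₁^2) := by
  set d := ‖q‖ with hd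
  have hd0 : 0 ≤ d := norm_nonneg q
  set S : Set E3 := {p : E3 | R₁ ≤ ‖p‖ ∧ ‖p‖ ≤ R₂} with hS
  set v : E3 := EuclideanSpace.single (0 : Fin 3) d with hv
  have hvn : ‖v‖ = d := by rw [hv, EuclideanSpace.norm_single, Real.norm_eq_abs, abs_of_nonneg hd0]
  -- basic facts about v's coordinates
  have hv0 : v 0 = d := by simp [hv, EuclideanSpace.single_apply]
  have hv1 : v 1 = 0 := by simp [hv, EuclideanSpace.single_apply]
  have hv2 : v 2 = 0 := by simp [hv, EuclideanSpace.single_apply]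
  -- S is measurable & compact, v ∉ S, integrand continuous on S
  have hSclosed : IsClosed S :=
    (isClosed_le continuous_const continuous_norm).inter
      (isClosed_le continuous_norm continuous_const)
  have hScpt : IsCompact S := by
    refine (isCompact_closedBall (0:E3) R₂).of_isClosed_subset hSclosed ?_
    intro p hp
    exact mem_closedBall_zero_iff.mpr hp.2
  have hvS : v ∉ S := by
    intro hmem
    rcases hcase with h | h
    · exact absurd hmem.2 (not_le.mpr (hvn ▸ h))
    · exact absurd hmem.1 (not_le.mpr (hvn ▸ h))
  have hIntS : IntegrableOn (fun p : E3 => (1:ℝ)/‖v - p‖) S := by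
    apply ContinuousOn.integrableOn_compact hScpt
    apply ContinuousOn.div continuousOn_const
      (Continuous.continuousOn ((continuous_const.sub continuous_id).norm))
    intro p hp
    simp only [ne_eq, norm_eq_zero, sub_eq_zero]
    intro hvp
    have hvp' : v - p = 0 := hvp
    exact hvS ((sub_eq_zero.mp hvp') ▸ hp)
  rw [rot q v (hvn ▸ hd) R₁ R₂]
  -- Transfer 1 : to (Fin 3 → ℝ)
  set g : (Fin 3 → ℝ) → ℝ := fun x => (1:ℝ)/Real.sqrt ((d - x 0)^2 + (x 1^2 + x 2^2)) with hg
  set T3 : Set (Fin 3 → ℝ) :=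
    {x | R₁^2 ≤ x 0^2 + (x 1^2 + x 2^2) ∧ x 0^2 + (x 1^2 + x 2^2) ≤ R₂^2} with hT3
  have hφ := (EuclideanSpace.volume_preserving_symm_measurableEquiv_toLp (Fin 3)).symm
  have hφemb := ((MeasurableEquiv.toLp 2 (Fin 3 → ℝ)).symm).symm.measurableEmbedding
  have hpre3 : ((MeasurableEquiv.toLp 2 (Fin 3 → ℝ)).symm).symm ⁻¹' S = T3 := by
    ext x
    have hn : ‖((MeasurableEquiv.toLp 2 (Fin 3 → ℝ)).symm).symm x‖
        = Real.sqrt (x 0^2 + (x 1^2 + x 2^2)) := by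
      rw [norm3, phi3_apply, phi3_apply, phi3_apply]; ring_nf
    simp only [hS, hT3, Set.mem_preimage, Set.mem_setOf_eq, hn]
    constructor
    · rintro ⟨ha, hb⟩
      exact ⟨by rwa [Real.le_sqrt h1 (by positivity)] at ha,
        by rwa [Real.sqrt_le_left hR2.le] at hb⟩
    · rintro ⟨ha, hb⟩
      exact ⟨by rwa [Real.le_sqrt h1 (by positivity)],
        by rwa [Real.sqrt_le_left hR2.le]⟩
  have hcomp3 : ∀ x : Fin 3 → ℝ,
      (1:ℝ)/‖v - ((MeasurableEquiv.toLp 2 (Fin 3 → ℝ)).symm).symm x‖ = g x := by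
    intro x
    have : ‖v - ((MeasurableEquiv.toLp 2 (Fin 3 → ℝ)).symm).symm x‖
        = Real.sqrt ((d - x 0)^2 + (x 1^2 + x 2^2)) := by
      rw [norm3]
      have esub : ∀ i, (v - ((MeasurableEquiv.toLp 2 (Fin 3 → ℝ)).symm).symm x) i
          = v i - x i := fun i => rfl
      rw [esub, esub, esub, hv0, hv1, hv2]
      ring_nf
    rw [hg, this]
  have hT3meas : MeasurableSet T3 := by
    have hc : Continuous (fun x : Fin 3 → ℝ => x 0^2 + (x 1^2 + x 2^2)) :=
      ((continuous_apply 0).pow 2).add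
        (((continuous_apply 1).pow 2).add ((continuous_apply 2).pow 2))
    exact ((isClosed_le continuous_const hc).inter (isClosed_le hc continuous_const)).measurableSet
  have step1 : ∫ p in S, (1:ℝ)/‖v - p‖ = ∫ x in T3, g x := by
    rw [← hφ.setIntegral_preimage_emb hφemb (fun p => (1:ℝ)/‖v - p‖) S, hpre3]
    exact setIntegral_congr_fun hT3meas (fun x _ => hcomp3 x)
  -- Transfer 2 : to ℝ × (Fin 2 → ℝ)
  set G : ℝ × (Fin 2 → ℝ) → ℝ :=
    fun zy => (1:ℝ)/Real.sqrt ((d - zy.1)^2 + (zy.2 0^2 + zy.2 1^2)) with hG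
  set T2 : Set (ℝ × (Fin 2 → ℝ)) :=
    {zy | R₁^2 ≤ zy.1^2 + (zy.2 0^2 + zy.2 1^2) ∧ zy.1^2 + (zy.2 0^2 + zy.2 1^2) ≤ R₂^2} with hT2
  have hT2meas : MeasurableSet T2 := by
    have hc : Continuous (fun zy : ℝ × (Fin 2 → ℝ) => zy.1^2 + (zy.2 0^2 + zy.2 1^2)) := by
      apply Continuous.add (continuous_fst.pow 2)
      exact (((continuous_apply 0).comp continuous_snd).pow 2).add
        (((continuous_apply 1).comp continuous_snd).pow 2)
    exact ((isClosed_le continuous_const hc).inter (isClosed_le hc continuous_const)).measurableSet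
  have hψ := (volume_preserving_piFinSuccAbove (fun _ : Fin 3 => ℝ) 0).symm
  have hψemb := (MeasurableEquiv.piFinSuccAbove (fun _ : Fin 3 => ℝ) 0).symm.measurableEmbedding
  have hpre2 : (MeasurableEquiv.piFinSuccAbove (fun _ : Fin 3 => ℝ) 0).symm ⁻¹' T3 = T2 := by
    ext ⟨z, y⟩
    simp only [hT3, hT2, Set.mem_preimage, Set.mem_setOf_eq, insert3]
    simp [Matrix.cons_val_zero, Matrix.cons_val_one, Matrix.head_cons]
  have hcomp2 : ∀ zy : ℝ × (Fin 2 → ℝ),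
      g ((MeasurableEquiv.piFinSuccAbove (fun _ : Fin 3 => ℝ) 0).symm zy) = G zy := by
    rintro ⟨z, y⟩
    simp only [hg, hG, insert3]
    simp [Matrix.cons_val_zero, Matrix.cons_val_one, Matrix.head_cons]
  have step2 : ∫ x in T3, g x = ∫ zy in T2, G zy := by
    rw [← hψ.setIntegral_preimage_emb hψemb g T3, hpre2]
    exact setIntegral_congr_fun hT2meas (fun zy _ => hcomp2 zy)
  -- Integrability transport
  have hI3 : IntegrableOn g T3 := by
    have := (hφ.integrableOn_comp_preimage hφemb
      (f := fun p : E3 => (1:ℝ)/‖v - p‖) (s := S)).mpr hIntS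
    rw [hpre3] at this
    exact this.congr_fun (fun x _ => hcomp3 x) hT3meas
  have hI2 : IntegrableOn G T2 := by
    have := (hψ.integrableOn_comp_preimage hψemb (f := g) (s := T3)).mpr hI3
    rw [hpre2] at this
    exact this.congr_fun (fun zy _ => hcomp2 zy) hT2meas
  -- Fubini
  have hIind : Integrable (Set.indicator T2 G)
      ((volume : Measure ℝ).prod (volume : Measure (Fin 2 → ℝ))) := by
    rw [← Measure.volume_eq_prod]
    exact (integrable_indicator_iff hT2meas).mpr hI2
  have step3 : ∫ zy in T2, G zy =
      ∫ z : ℝ, ∫ y : Fin 2 → ℝ, Set.indicator T2 G (z, y) := by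
    rw [← MeasureTheory.integral_indicator hT2meas, Measure.volume_eq_prod,
      MeasureTheory.integral_prod _ hIind]
  -- Inner integral evaluation
  set H : ℝ → ℝ → ℝ := fun r z => Real.sqrt ((d-z)^2 + max (r^2 - z^2) 0) with hH
  have inner_eq : ∀ z : ℝ, z ≠ d →
      (∫ y : Fin 2 → ℝ, Set.indicator T2 G (z, y)) =
      Set.indicator (Icc (-R₂) R₂) (fun z => 2*π*(H R₂ z - H R₁ z)) z := by
    intro z hz
    set Uz : Set (Fin 2 → ℝ) :=
      {y | R₁^2 ≤ z^2 + (y 0^2 + y 1^2) ∧ z^2 + (y 0^2 + y 1^2) ≤ R₂^2} with hUz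
    have hUzmeas : MeasurableSet Uz := by
      have hc : Continuous (fun y : Fin 2 → ℝ => z^2 + (y 0^2 + y 1^2)) := by
        apply Continuous.add continuous_const
        exact ((continuous_apply 0).pow 2).add ((continuous_apply 1).pow 2)
      exact ((isClosed_le continuous_const hc).inter
        (isClosed_le hc continuous_const)).measurableSet
    have hind : ∀ y : Fin 2 → ℝ, Set.indicator T2 G (z, y) =
        Set.indicator Uz (fun y => G (z, y)) y := by
      intro y
      by_cases hmem : (z, y) ∈ T2
      · rw [Set.indicator_of_mem hmem, Set.indicator_of_mem (by exact hmem : y ∈ Uz)]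
      · rw [Set.indicator_of_notMem hmem, Set.indicator_of_notMem (by exact hmem : y ∉ Uz)]
    rw [integral_congr_ae (Filter.Eventually.of_forall hind),
      MeasureTheory.integral_indicator hUzmeas]
    -- transfer to E2
    have hφ2 := EuclideanSpace.volume_preserving_symm_measurableEquiv_toLp (Fin 2)
    have hφ2emb := ((MeasurableEquiv.toLp 2 (Fin 2 → ℝ)).symm).measurableEmbedding
    have wsq : ∀ w : E2, (((MeasurableEquiv.toLp 2 (Fin 2 → ℝ)).symm) w) 0^2
        + (((MeasurableEquiv.toLp 2 (Fin 2 → ℝ)).symm) w) 1^2 = ‖w‖^2 := by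
      intro w
      rw [norm2 w, Real.sq_sqrt (by positivity)]
      rfl
    have htrans : ∫ y in Uz, G (z, y) =
        ∫ w in ((MeasurableEquiv.toLp 2 (Fin 2 → ℝ)).symm) ⁻¹' Uz,
          (1:ℝ)/Real.sqrt ((d - z)^2 + ‖w‖^2) := by
      rw [← hφ2.setIntegral_preimage_emb hφ2emb (fun y => G (z, y)) Uz]
      refine setIntegral_congr_fun (hUzmeas.preimage (MeasurableEquiv.measurable _))
        (fun w _ => ?_)
      rw [hG, ← wsq w]
    have hpreU : ((MeasurableEquiv.toLp 2 (Fin 2 → ℝ)).symm) ⁻¹' Uz =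
        {w : E2 | R₁^2 ≤ z^2 + ‖w‖^2 ∧ z^2 + ‖w‖^2 ≤ R₂^2} := by
      ext w
      rw [Set.mem_preimage, hUz, Set.mem_setOf_eq, Set.mem_setOf_eq, ← wsq w]
    rw [htrans, hpreU]
    by_cases hzR : z ∈ Icc (-R₂) R₂
    · have hz2 : z^2 ≤ R₂^2 := sq_le_sq' hzR.1 hzR.2
      set a₁ : ℝ := Real.sqrt (max (R₁^2 - z^2) 0) with ha₁
      set a₂ : ℝ := Real.sqrt (R₂^2 - z^2) with ha₂
      have hseta : {w : E2 | R₁^2 ≤ z^2 + ‖w‖^2 ∧ z^2 + ‖w‖^2 ≤ R₂^2} =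
          {w : E2 | a₁ ≤ ‖w‖ ∧ ‖w‖ ≤ a₂} := by
        ext w
        simp only [Set.mem_setOf_eq, ha₁, ha₂]
        constructor
        · rintro ⟨hA, hB⟩
          refine ⟨(Real.sqrt_le_left (norm_nonneg w)).mpr
            (max_le (by nlinarith) (by positivity)), ?_⟩
          rw [Real.le_sqrt (norm_nonneg w) (by nlinarith)]
          nlinarith
        · rintro ⟨hA, hB⟩
          rw [Real.sqrt_le_left (norm_nonneg w), max_le_iff] at hA
          rw [Real.le_sqrt (norm_nonneg w) (by nlinarith)] at hB
          exact ⟨by nlinarith [hA.1], by nlinarith⟩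
      rw [hseta, annulus2 (d - z) a₁ a₂ (sub_ne_zero.mpr (fun h => hz h.symm))
        (Real.sqrt_nonneg _) (Real.sqrt_le_sqrt (max_le (by nlinarith) (by nlinarith)))]
      rw [Set.indicator_of_mem hzR]
      have ea2 : a₂^2 = R₂^2 - z^2 := Real.sq_sqrt (by nlinarith)
      have ea1 : a₁^2 = max (R₁^2 - z^2) 0 := Real.sq_sqrt (le_max_right _ _)
      have hmax : max (R₂^2 - z^2) 0 = R₂^2 - z^2 := max_eq_left (by nlinarith)
      simp only [hH]
      rw [ea2, ea1, hmax]
    · have hempty : {w : E2 | R₁^2 ≤ z^2 + ‖w‖^2 ∧ z^2 + ‖w‖^2 ≤ R₂^2} = ∅ := by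
        ext w
        simp only [Set.mem_setOf_eq, Set.mem_empty_iff_false, iff_false, not_and, not_le]
        intro _
        have : R₂^2 < z^2 := by
          simp only [Set.mem_Icc, not_and, not_le] at hzR
          by_cases h : -R₂ ≤ z
          · nlinarith [hzR h]
          · nlinarith [not_le.mp h]
        nlinarith [sq_nonneg ‖w‖]
      rw [hempty, Set.indicator_of_notMem hzR]
      simp
  -- outer integral
  have hae : ∀ᵐ z : ℝ, z ≠ d := by
    have hset : {z : ℝ | ¬ z ≠ d} = {d} := by ext z; simp [not_not]
    rw [MeasureTheory.ae_iff, hset]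
    exact measure_singleton d
  have step4 : (∫ z : ℝ, ∫ y : Fin 2 → ℝ, Set.indicator T2 G (z, y)) =
      ∫ z in (-R₂)..R₂, 2*π*(H R₂ z - H R₁ z) := by
    rw [integral_congr_ae (hae.mono (fun z hz => inner_eq z hz)),
      MeasureTheory.integral_indicator measurableSet_Icc,
      MeasureTheory.integral_Icc_eq_integral_Ioc,
      ← intervalIntegral.integral_of_le (by linarith : -R₂ ≤ R₂)]
  rw [step1, step2, step3, step4]
  have hsub : ∫ z in (-R₂)..R₂, 2*π*(H R₂ z - H R₁ z) =
      2*π*((∫ z in (-R₂)..R₂, H R₂ z) - ∫ z in (-R₂)..R₂, H R₁ z) := by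
    rw [← intervalIntegral.integral_sub ((Hcont d R₂).intervalIntegrable _ _)
      ((Hcont d R₁).intervalIntegrable _ _), ← intervalIntegral.integral_const_mul]
  rw [hsub, hH]
  rcases hcase with hout | hin
  · have hd0' : 0 < d := lt_trans hR2 hout
    rw [K_int d R₂ R₂ hd0 hR2.le le_rfl (Or.inl hout),
      K_int d R₁ R₂ hd0 h1 h12 (Or.inl hout), if_pos hout, if_pos hout, if_pos hout]
    field_simp
    ring
  · have hnot : ¬ R₂ < d := not_lt.mpr (le_trans (le_of_lt hin) h12)
    rw [K_int d R₂ R₂ hd0 hR2.le le_rfl (Or.inr (lt_of_lt_of_le hin h12)),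
      K_int d R₁ R₂ hd0 h1 h12 (Or.inr hin), if_neg hnot, if_neg hnot, if_neg hnot]
    ring

theorem newtonian_potential_ball_and_shell (R ρ₀ : ℝ) (hR : 0 < R) (hρ : 0 < ρ₀) :
    (∀ q : EuclideanSpace ℝ (Fin 3), R < ‖q‖ →
      (∫ p in Metric.closedBall (0 : EuclideanSpace ℝ (Fin 3)) R, ρ₀ / ‖q - p‖) =
        (ρ₀ * ((4 / 3) * Real.pi * R ^ 3)) / ‖q‖) ∧
    (∀ R₁ R₂ : ℝ, 0 < R₁ → R₁ ≤ R₂ →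
      ∀ q₁ q₂ : EuclideanSpace ℝ (Fin 3), ‖q₁‖ < R₁ → ‖q₂‖ < R₁ →
        (∫ p in {p : EuclideanSpace ℝ (Fin 3) | R₁ ≤ ‖p‖ ∧ ‖p‖ ≤ R₂}, ρ₀ / ‖q₁ - p‖) =
        (∫ p in {p : EuclideanSpace ℝ (Fin 3) | R₁ ≤ ‖p‖ ∧ ‖p‖ ≤ R₂}, ρ₀ / ‖q₂ - p‖)) := by
  have hdiv : ∀ (q : E3) (s : Set E3), (∫ p in s, ρ₀ / ‖q - p‖) =
      ρ₀ * ∫ p in s, (1:ℝ) / ‖q - p‖ := by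
    intro q s
    rw [← MeasureTheory.integral_const_mul]
    congr 1
    funext p
    rw [mul_one_div]
  constructor
  · intro q hq
    have hset : Metric.closedBall (0 : E3) R = {p : E3 | (0:ℝ) ≤ ‖p‖ ∧ ‖p‖ ≤ R} := by
      ext p
      simp [Metric.mem_closedBall, dist_zero_right, norm_nonneg]
    rw [hset, hdiv, annulus3 0 R le_rfl hR.le hR q (Or.inl hq), if_pos hq]
    field_simp
    norm_num
  · intro R₁ R₂ hR₁ hR₁₂ q₁ q₂ hq₁ hq₂
    have hR₂ : 0 < R₂ := lt_of_lt_of_le hR₁ hR₁₂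
    have h1 : ¬ R₂ < ‖q₁‖ := not_lt.mpr (le_trans hq₁.le hR₁₂)
    have h2 : ¬ R₂ < ‖q₂‖ := not_lt.mpr (le_trans hq₂.le hR₁₂)
    rw [hdiv, hdiv, annulus3 R₁ R₂ hR₁.le hR₁₂ hR₂ q₁ (Or.inr hq₁),
      annulus3 R₁ R₂ hR₁.le hR₁₂ hR₂ q₂ (Or.inr hq₂), if_neg h1, if_neg h2]
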